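/- Let 𝒢 ⊆ ℝ^M be a convex set and F a conservative numerical flux that is invariant-region-preserving for 𝒢 with wave-speed bound λ > 0. Fix integers n_f ≥ 1 and n_q^∂ ≥ 1, n_q ≥ 1, and data: face areas A_f > 0 with |∂κ| = Σ_{f=1}^{n_f} A_f; normalized surface weights ŵ_l > 0 (l = 1,…,n_q^∂) with Σ_l ŵ_l = 1; one unit normal n_f ∈ ℝ^d per face satisfying the closure condition Σ_{f=1}^{n_f} A_f·F(a, a, n_f) = 0 for every a ∈ ℝ^M; interior surface states y_{f,l} ∈ 𝒢 and exterior surface states y⁻_{f,l} ∈ 𝒢; volume states y_v ∈ 𝒢 (v = 1,…,n_q); coefficients θ_v ≥ 0 and θ_{f,l} > 0 with Σ_v θ_v + Σ_{f,l} θ_{f,l} = 1; and reals |κ| > 0, Δt > 0. Define ȳ = Σ_v θ_v·y_v + Σ_{f,l} θ_{f,l}·y_{f,l} and ȳ′ = ȳ − (Δt/|κ|)·Σ_{f=1}^{n_f} Σ_{l=1}^{n_q^∂} A_f·ŵ_l·F(y_{f,l}, y⁻_{f,l}, n_f). If Δt·λ/|κ| ≤ (1/2)·min{L_A, L_B}, where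 L_A = min{ θ_{f,l}/(A_f·ŵ_l) : 1 ≤ f ≤ n_f − 1, 1 ≤ l ≤ n_q^∂ } and L_B = min{ θ_{n_f,l}/(|∂κ|·ŵ_l) : 1 ≤ l ≤ n_q^∂ } (minima over empty index sets are ignored), then ȳ′ ∈ 𝒢. -/

import Mathlib

open Finset

/-- The simplified CFL condition (Eq. 30) for straight-sided elements with one
constant normal per face and an identical normalized surface quadrature rule
on every face: the evolved element average remains in the invariant set `G`. -/
theorem evolved_element_average_in_invariant_set_straight_sided
    (M d : ℕ)
    (G : Set (Fin M → ℝ)) (hGconv : Convex ℝ G)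
    (F : (Fin M → ℝ) → (Fin M → ℝ) → (Fin d → ℝ) → (Fin M → ℝ))
    (lam : ℝ) (hlam : 0 < lam)
    -- `F` is conservative
    (hcons : ∀ a b n, F a b n = -(F b a (-n)))
    -- `F` is invariant-region-preserving for `G` with wave-speed bound `lam`
    (hIRP : ∀ a ∈ G, ∀ b ∈ G, ∀ c ∈ G, ∀ n : Fin d → ℝ, (∑ k, n k ^ 2) = 1 →
      ∀ μ : ℝ, 0 ≤ μ → μ * lam ≤ 1 / 2 →
        a - μ • (F a b n + F a c (-n)) ∈ G)
    (nf nqs nq : ℕ) (hnf : 1 ≤ nf) (hnqs : 1 ≤ nqs) (hnq : 1 ≤ nq)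
    -- face areas and total boundary area
    (A : Fin nf → ℝ) (hA : ∀ f, 0 < A f)
    (bdry : ℝ) (hbdry : bdry = ∑ f, A f)
    -- normalized surface quadrature weights, identical on every face
    (w : Fin nqs → ℝ) (hw : ∀ l, 0 < w l) (hwsum : ∑ l, w l = 1)
    -- one unit normal per face, with the closure condition
    (nvec : Fin nf → (Fin d → ℝ)) (hnvec : ∀ f, (∑ k, nvec f k ^ 2) = 1)
    (hclosure : ∀ a : Fin M → ℝ, (∑ f, A f • F a a (nvec f)) = 0)
    -- interior and exterior surface states, and volume states, all in `G`
    (yin yout : Fin nf → Fin nqs → (Fin M → ℝ))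
    (hyin : ∀ f l, yin f l ∈ G) (hyout : ∀ f l, yout f l ∈ G)
    (yv : Fin nq → (Fin M → ℝ)) (hyv : ∀ v, yv v ∈ G)
    -- convex-combination coefficients
    (θv : Fin nq → ℝ) (hθv : ∀ v, 0 ≤ θv v)
    (θs : Fin nf → Fin nqs → ℝ) (hθs : ∀ f l, 0 < θs f l)
    (hsum : (∑ v, θv v) + ∑ f, ∑ l, θs f l = 1)
    (κvol Δt : ℝ) (hκ : 0 < κvol) (hΔt : 0 < Δt)
    -- the distinguished last face
    (lastF : Fin nf) (hlastF : (lastF : ℕ) = nf - 1)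
    -- CFL condition: Δt·λ/|κ| ≤ (1/2)·min{L_A, L_B}
    (hLA : ∀ (f : Fin nf) (l : Fin nqs), (f : ℕ) < nf - 1 →
      Δt * lam / κvol ≤ (1 / 2) * (θs f l / (A f * w l)))
    (hLB : ∀ l : Fin nqs,
      Δt * lam / κvol ≤ (1 / 2) * (θs lastF l / (bdry * w l)))
    -- the element average and its evolution
    (ybar ybar' : Fin M → ℝ)
    (hybar : ybar = (∑ v, θv v • yv v) + ∑ f, ∑ l, θs f l • yin f l)
    (hybar' : ybar' = ybar - (Δt / κvol) •
      ∑ f, ∑ l, (A f * w l) • F (yin f l) (yout f l) (nvec f)) :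
    ybar' ∈ G := by
  classical
  have hκ0 : κvol ≠ 0 := ne_of_gt hκ
  have hbpos : 0 < bdry := by
    rw [hbdry]
    exact Finset.sum_pos (fun f _ => hA f) ⟨⟨0, hnf⟩, Finset.mem_univ _⟩
  have hb0 : bdry ≠ 0 := ne_of_gt hbpos
  set E : Finset (Fin nf) := Finset.univ.erase lastF with hE
  have hmemE : ∀ f ∈ E, (f : ℕ) < nf - 1 := by
    intro f hf
    have hne : f ≠ lastF := Finset.ne_of_mem_erase hf
    have h1 : (f : ℕ) ≠ nf - 1 := by
      rw [← hlastF]; exact fun h => hne (Fin.ext h)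
    have h2 : (f : ℕ) < nf := f.isLt
    omega
  set c : ℝ := Δt / κvol with hc
  set ZA : Fin nf → Fin nqs → (Fin M → ℝ) := fun f l =>
    yin f l - (Δt * (A f * w l) / (κvol * θs f l)) •
      (F (yin f l) (yout f l) (nvec f) + F (yin f l) (yin lastF l) (-(nvec f))) with hZAdef
  set U : Fin nf → Fin nqs → (Fin M → ℝ) := fun f l =>
    yin lastF l - (Δt * (bdry * w l) / (κvol * θs lastF l)) •
      (F (yin lastF l) (if f = lastF then yout lastF l else yin f l) (nvec f)
        + F (yin lastF l) (yin lastF l) (-(nvec f))) with hUdef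
  set ZB : Fin nqs → (Fin M → ℝ) := fun l => ∑ f, (A f / bdry) • U f l with hZBdef
  -- memberships
  have hZAmem : ∀ f ∈ E, ∀ l, ZA f l ∈ G := by
    intro f hf l
    have hflt := hmemE f hf
    have hP : 0 < A f * w l := mul_pos (hA f) (hw l)
    have hT : 0 < θs f l := hθs f l
    have hμ0 : 0 ≤ Δt * (A f * w l) / (κvol * θs f l) := by positivity
    have hmulam : Δt * (A f * w l) / (κvol * θs f l) * lam ≤ 1 / 2 := by
      have h1 := hLA f l hflt
      have h2 : Δt * lam / κvol * (A f * w l) ≤ 1 / 2 * (θs f l / (A f * w l)) * (A f * w l) :=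
        mul_le_mul_of_nonneg_right h1 hP.le
      have h3 : 1 / 2 * (θs f l / (A f * w l)) * (A f * w l) = 1 / 2 * θs f l := by
        rw [mul_assoc, div_mul_cancel₀ _ hP.ne']
      rw [h3] at h2
      rw [div_mul_eq_mul_div, div_le_iff₀ (by positivity : (0:ℝ) < κvol * θs f l)]
      have h4 := mul_le_mul_of_nonneg_right h2 hκ.le
      have h5 : Δt * lam / κvol * (A f * w l) * κvol = Δt * (A f * w l) * lam := by
        field_simp
      rw [h5] at h4
      nlinarith [h4]
    exact hIRP _ (hyin f l) _ (hyout f l) _ (hyin lastF l) _ (hnvec f) _ hμ0 hmulam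
  have hUmem : ∀ f l, U f l ∈ G := by
    intro f l
    have hbG : (if f = lastF then yout lastF l else yin f l) ∈ G := by
      split_ifs
      · exact hyout lastF l
      · exact hyin f l
    have hP : 0 < bdry * w l := mul_pos hbpos (hw l)
    have hT : 0 < θs lastF l := hθs lastF l
    have hμ0 : 0 ≤ Δt * (bdry * w l) / (κvol * θs lastF l) := by positivity
    have hmulam : Δt * (bdry * w l) / (κvol * θs lastF l) * lam ≤ 1 / 2 := by
      have h1 := hLB l
      have h2 : Δt * lam / κvol * (bdry * w l) ≤ 1 / 2 * (θs lastF l / (bdry * w l)) * (bdry * w l) :=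
        mul_le_mul_of_nonneg_right h1 hP.le
      have h3 : 1 / 2 * (θs lastF l / (bdry * w l)) * (bdry * w l) = 1 / 2 * θs lastF l := by
        rw [mul_assoc, div_mul_cancel₀ _ hP.ne']
      rw [h3] at h2
      rw [div_mul_eq_mul_div, div_le_iff₀ (by positivity : (0:ℝ) < κvol * θs lastF l)]
      have h4 := mul_le_mul_of_nonneg_right h2 hκ.le
      have h5 : Δt * lam / κvol * (bdry * w l) * κvol = Δt * (bdry * w l) * lam := by
        field_simp
      rw [h5] at h4
      nlinarith [h4]
    exact hIRP _ (hyin lastF l) _ hbG _ (hyin lastF l) _ (hnvec f) _ hμ0 hmulam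
  have hZBmem : ∀ l, ZB l ∈ G := by
    intro l
    refine hGconv.sum_mem (fun f _ => (div_pos (hA f) hbpos).le)
      ?_ (fun f _ => hUmem f l)
    rw [← Finset.sum_div, ← hbdry, div_self hb0]
  -- scalar expansion of ZA terms
  have hAcoef : ∀ f l, θs f l • ZA f l = θs f l • yin f l
      - (c * (A f * w l)) • F (yin f l) (yout f l) (nvec f)
      + (c * (A f * w l)) • F (yin lastF l) (yin f l) (nvec f) := by
    intro f l
    have h1 : F (yin f l) (yin lastF l) (-(nvec f)) = -F (yin lastF l) (yin f l) (nvec f) := by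
      rw [hcons (yin f l) (yin lastF l) (-(nvec f)), neg_neg]
    have h2 : θs f l * (Δt * (A f * w l) / (κvol * θs f l)) = c * (A f * w l) := by
      rw [hc]; field_simp [ne_of_gt (hθs f l)]
    simp only [hZAdef]
    rw [smul_sub, smul_smul, h2, h1, smul_add, smul_neg]
    abel
  -- expansion of ZB terms
  have hBexp : ∀ l, θs lastF l • ZB l = θs lastF l • yin lastF l
      - (c * (A lastF * w l)) • F (yin lastF l) (yout lastF l) (nvec lastF)
      - ∑ f ∈ E, (c * (A f * w l)) • F (yin lastF l) (yin f l) (nvec f) := by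
    intro l
    have hθT : θs lastF l ≠ 0 := ne_of_gt (hθs lastF l)
    have hterm : ∀ f : Fin nf, θs lastF l • ((A f / bdry) • U f l)
        = (θs lastF l * (A f / bdry)) • yin lastF l
          - (c * (A f * w l)) • F (yin lastF l) (if f = lastF then yout lastF l else yin f l) (nvec f)
          + (c * (A f * w l)) • F (yin lastF l) (yin lastF l) (nvec f) := by
      intro f
      have hs : θs lastF l * (A f / bdry) * (Δt * (bdry * w l) / (κvol * θs lastF l))
          = c * (A f * w l) := by
        rw [hc]; field_simp
      have h1 : F (yin lastF l) (yin lastF l) (-(nvec f))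
          = -F (yin lastF l) (yin lastF l) (nvec f) := by
        rw [hcons (yin lastF l) (yin lastF l) (-(nvec f)), neg_neg]
      rw [smul_smul]
      simp only [hUdef]
      rw [smul_sub, smul_smul, hs, smul_add, h1, smul_neg]
      abel
    have hexp : θs lastF l • ZB l
        = ∑ f, ((θs lastF l * (A f / bdry)) • yin lastF l
          - (c * (A f * w l)) • F (yin lastF l) (if f = lastF then yout lastF l else yin f l) (nvec f)
          + (c * (A f * w l)) • F (yin lastF l) (yin lastF l) (nvec f)) := by
      simp only [hZBdef]
      rw [Finset.smul_sum]
      exact Finset.sum_congr rfl (fun f _ => hterm f)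
    rw [hexp, Finset.sum_add_distrib, Finset.sum_sub_distrib]
    have hsum1 : ∑ f : Fin nf, (θs lastF l * (A f / bdry)) • yin lastF l
        = θs lastF l • yin lastF l := by
      rw [← Finset.sum_smul, ← Finset.mul_sum, ← Finset.sum_div, ← hbdry, div_self hb0, mul_one]
    have hsum3 : ∑ f : Fin nf, (c * (A f * w l)) • F (yin lastF l) (yin lastF l) (nvec f)
        = 0 := by
      have heach : ∀ f : Fin nf, (c * (A f * w l)) • F (yin lastF l) (yin lastF l) (nvec f)
          = (c * w l) • (A f • F (yin lastF l) (yin lastF l) (nvec f)) := by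
        intro f
        rw [smul_smul]
        congr 1
        ring
      rw [Finset.sum_congr rfl (fun f _ => heach f), ← Finset.smul_sum, hclosure, smul_zero]
    have hsum2 : (∑ f : Fin nf, (c * (A f * w l)) •
          F (yin lastF l) (if f = lastF then yout lastF l else yin f l) (nvec f))
        = (c * (A lastF * w l)) • F (yin lastF l) (yout lastF l) (nvec lastF)
          + ∑ f ∈ E, (c * (A f * w l)) • F (yin lastF l) (yin f l) (nvec f) := by
      rw [← Finset.add_sum_erase _ _ (Finset.mem_univ lastF)]
      simp only [if_pos rfl]
      congr 1
      refine Finset.sum_congr rfl (fun f hf => ?_)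
      rw [if_neg (Finset.ne_of_mem_erase hf)]
    rw [hsum1, hsum2, hsum3]
    abel
  -- the grand convex combination
  set wgt : (Fin nq ⊕ Fin nf × Fin nqs) → ℝ :=
    Sum.elim θv (fun p => θs p.1 p.2) with hwgt
  set pt : (Fin nq ⊕ Fin nf × Fin nqs) → (Fin M → ℝ) :=
    Sum.elim yv (fun p => if p.1 = lastF then ZB p.2 else ZA p.1 p.2) with hpt
  have hmain : ybar' = ∑ i, wgt i • pt i := by
    have hsplit : (∑ i, wgt i • pt i)
        = (∑ v, θv v • yv v)
          + ((∑ l, θs lastF l • ZB l) + ∑ f ∈ E, ∑ l, θs f l • ZA f l) := by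
      rw [Fintype.sum_sum_type]
      simp only [hwgt, hpt, Sum.elim_inl, Sum.elim_inr]
      congr 1
      rw [Fintype.sum_prod_type]
      rw [← Finset.add_sum_erase _
        (fun f => ∑ l, θs f l • (if f = lastF then ZB l else ZA f l)) (Finset.mem_univ lastF)]
      congr 1
      · simp
      · refine Finset.sum_congr rfl (fun f hf => Finset.sum_congr rfl (fun l _ => ?_))
        rw [if_neg (Finset.ne_of_mem_erase hf)]
    rw [hsplit]
    rw [Finset.sum_congr rfl (fun l (_ : l ∈ Finset.univ) => hBexp l)]
    rw [Finset.sum_congr rfl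
      (fun f (hf : f ∈ E) => Finset.sum_congr rfl (fun l (_ : l ∈ Finset.univ) => hAcoef f l))]
    rw [hybar', hybar]
    -- expand flux scaling on the LHS
    have hflux : (Δt / κvol) • (∑ f, ∑ l, (A f * w l) • F (yin f l) (yout f l) (nvec f))
        = ∑ f, ∑ l, (c * (A f * w l)) • F (yin f l) (yout f l) (nvec f) := by
      rw [Finset.smul_sum]
      refine Finset.sum_congr rfl (fun f _ => ?_)
      rw [Finset.smul_sum]
      exact Finset.sum_congr rfl (fun l _ => by rw [smul_smul, hc])
    rw [hflux]
    -- split RHS nested sums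
    rw [Finset.sum_sub_distrib, Finset.sum_sub_distrib]
    have hAsplit : ∑ f ∈ E, ∑ l, (θs f l • yin f l
          - (c * (A f * w l)) • F (yin f l) (yout f l) (nvec f)
          + (c * (A f * w l)) • F (yin lastF l) (yin f l) (nvec f))
        = (∑ f ∈ E, ∑ l, θs f l • yin f l)
          - (∑ f ∈ E, ∑ l, (c * (A f * w l)) • F (yin f l) (yout f l) (nvec f))
          + ∑ f ∈ E, ∑ l, (c * (A f * w l)) • F (yin lastF l) (yin f l) (nvec f) := by
      simp only [Finset.sum_add_distrib, Finset.sum_sub_distrib]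
    rw [hAsplit]
    have hcomm : ∑ l : Fin nqs, ∑ f ∈ E, (c * (A f * w l)) • F (yin lastF l) (yin f l) (nvec f)
        = ∑ f ∈ E, ∑ l : Fin nqs, (c * (A f * w l)) • F (yin lastF l) (yin f l) (nvec f) :=
      Finset.sum_comm
    rw [hcomm]
    have hyinsum : (∑ l, θs lastF l • yin lastF l) + ∑ f ∈ E, ∑ l, θs f l • yin f l
        = ∑ f, ∑ l, θs f l • yin f l :=
      Finset.add_sum_erase _ (fun f => ∑ l, θs f l • yin f l) (Finset.mem_univ lastF)
    have hfluxsum : (∑ l, (c * (A lastF * w l)) • F (yin lastF l) (yout lastF l) (nvec lastF))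
          + ∑ f ∈ E, ∑ l, (c * (A f * w l)) • F (yin f l) (yout f l) (nvec f)
        = ∑ f, ∑ l, (c * (A f * w l)) • F (yin f l) (yout f l) (nvec f) :=
      Finset.add_sum_erase _
        (fun f => ∑ l, (c * (A f * w l)) • F (yin f l) (yout f l) (nvec f))
        (Finset.mem_univ lastF)
    rw [← hyinsum, ← hfluxsum]
    abel
  rw [hmain]
  refine hGconv.sum_mem ?_ ?_ ?_
  · rintro (v | ⟨f, l⟩) _
    · exact hθv v
    · exact (hθs f l).le
  · rw [Fintype.sum_sum_type]
    simp only [hwgt, Sum.elim_inl, Sum.elim_inr]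
    rw [Fintype.sum_prod_type]
    exact hsum
  · rintro (v | ⟨f, l⟩) _
    · exact hyv v
    · simp only [hpt, Sum.elim_inr]
      split_ifs with h
      · exact hZBmem l
      · exact hZAmem f (Finset.mem_erase.mpr ⟨h, Finset.mem_univ f⟩) l
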